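/- arXiv:2503.04487 — 3 statements merged into one kernel-verified Lean document; each statement's English description precedes it below -/
import Mathlib

section
/- Let μ : A* → A* be a substitution and k ≥ 0. If ((m_i, a_i))_{i=0,...,k} is an admissible sequence with respect to μ (i.e., for every i ∈ {1,...,k}, the word m_{i-1}a_{i-1} is a prefix of μ(a_i)), then Σ_{i=0}^{k} |μ^i(m_i)| < |μ^k(m_k a_k)|. -/
/-- `substApp μ n w` is `μ^n(w)`: the `n`-fold application of the substitution `μ`
(extended to words by concatenation) to the word `w`. -/
def substApp {A : Type*} (μ : A → List A) (n : ℕ) (w : List A) : List A :=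
  (fun v => v.flatMap μ)^[n] w

lemma substApp_append {A : Type*} (μ : A → List A) (n : ℕ) (u v : List A) :
    substApp μ n (u ++ v) = substApp μ n u ++ substApp μ n v := by
  induction n generalizing u v with
  | zero => rfl
  | succ n ih =>
      simp only [substApp, Function.iterate_succ_apply, List.flatMap_append] at *
      exact ih _ _

lemma substApp_prefix {A : Type*} (μ : A → List A) (n : ℕ) {u v : List A}
    (h : u <+: v) : substApp μ n u <+: substApp μ n v := by
  obtain ⟨t, rfl⟩ := h
  exact ⟨substApp μ n t, (substApp_append μ n u t).symm⟩

/-- Dumont–Thomas, Lemma 1.1: if `((m_i, a_i))_{i=0,...,k}` is admissible with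
respect to `μ` (i.e. `m_{i-1} a_{i-1}` is a prefix of `μ(a_i)` for `1 ≤ i ≤ k`),
then `∑_{i=0}^{k} |μ^i(m_i)| < |μ^k(m_k a_k)|`. -/
theorem stmt4 {A : Type*} (μ : A → List A) (hne : ∀ c, μ c ≠ []) (k : ℕ)
    (m : ℕ → List A) (a : ℕ → A)
    (hadm : ∀ i, 1 ≤ i → i ≤ k → (m (i - 1) ++ [a (i - 1)]) <+: μ (a i)) :
    ∑ i ∈ Finset.range (k + 1), (substApp μ i (m i)).length
      < (substApp μ k (m k ++ [a k])).length := by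
  induction k with
  | zero =>
      simp [substApp]
  | succ k ih =>
      have IH := ih (fun i h1 h2 => hadm i h1 (h2.trans (Nat.le_succ k)))
      rw [Finset.sum_range_succ]
      have hpref : substApp μ k (m k ++ [a k]) <+: substApp μ k (μ (a (k + 1))) :=
        substApp_prefix μ k (hadm (k + 1) (Nat.le_add_left 1 k) le_rfl)
      have h1 : (substApp μ k (m k ++ [a k])).length
          ≤ (substApp μ (k + 1) [a (k + 1)]).length := by
        have : substApp μ (k + 1) [a (k + 1)] = substApp μ k (μ (a (k + 1))) := by
          simp [substApp, Function.iterate_succ_apply]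
        rw [this]
        exact hpref.length_le
      rw [substApp_append, List.length_append]
      omega
end

section
/- For the substitution μ : a ↦ ccd, b ↦ cd, c ↦ ab, d ↦ a, the letter a never occurs in μ^{2n+1}(a) and the letter c never occurs in μ^{2n}(a), for all n ≥ 0; in particular μ is not primitive. -/
/-- The substitution `μ : a ↦ ccd, b ↦ cd, c ↦ ab, d ↦ a` on `{a,b,c,d} = Fin 4`. -/
def mu10 : Fin 4 → List (Fin 4) := ![[2, 2, 3], [2, 3], [0, 1], [0]]

lemma substApp_succ {A : Type*} (μ : A → List A) (n : ℕ) (w : List A) :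
    substApp μ (n + 1) w = (substApp μ n w).flatMap μ := by
  simp [substApp, Function.iterate_succ_apply']

lemma mu_low {w : List (Fin 4)} (h : ∀ x ∈ w, x = 0 ∨ x = 1) :
    ∀ x ∈ w.flatMap mu10, x = 2 ∨ x = 3 := by
  intro x hx
  rw [List.mem_flatMap] at hx
  obtain ⟨y, hy, hx⟩ := hx
  rcases h y hy with rfl | rfl <;> simp [mu10] at hx <;> tauto

lemma mu_high {w : List (Fin 4)} (h : ∀ x ∈ w, x = 2 ∨ x = 3) :
    ∀ x ∈ w.flatMap mu10, x = 0 ∨ x = 1 := by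
  intro x hx
  rw [List.mem_flatMap] at hx
  obtain ⟨y, hy, hx⟩ := hx
  rcases h y hy with rfl | rfl <;> simp [mu10] at hx <;> tauto

lemma even_low : ∀ n : ℕ, ∀ x ∈ substApp mu10 (2 * n) [0], x = 0 ∨ x = 1 := by
  intro n
  induction n with
  | zero => simp [substApp]
  | succ n ih =>
      have : 2 * (n + 1) = (2 * n + 1) + 1 := by ring
      rw [this, substApp_succ, substApp_succ]
      exact mu_high (mu_low ih)

lemma odd_high : ∀ n : ℕ, ∀ x ∈ substApp mu10 (2 * n + 1) [0], x = 2 ∨ x = 3 := by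
  intro n
  rw [substApp_succ]
  exact mu_low (even_low n)

/-- For `μ : a ↦ ccd, b ↦ cd, c ↦ ab, d ↦ a`, the letter `a` never occurs in
`μ^{2n+1}(a)` and the letter `c` never occurs in `μ^{2n}(a)`; in particular `μ`
is not primitive. -/
theorem stmt10 :
    (∀ n : ℕ, (0 : Fin 4) ∉ substApp mu10 (2 * n + 1) [0]) ∧
    (∀ n : ℕ, (2 : Fin 4) ∉ substApp mu10 (2 * n) [0]) ∧
    ¬ ∃ k : ℕ, ∀ a b : Fin 4, a ∈ substApp mu10 k [b] := by
  refine ⟨fun n h => ?_, fun n h => ?_, fun ⟨k, hk⟩ => ?_⟩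
  · rcases odd_high n 0 h with h' | h' <;> exact absurd h' (by decide)
  · rcases even_low n 2 h with h' | h' <;> exact absurd h' (by decide)
  · rcases Nat.even_or_odd k with ⟨m, hm⟩ | ⟨m, hm⟩
    · have := even_low m 2 (by rw [show 2 * m = k from by omega]; exact hk 2 0)
      rcases this with h' | h' <;> exact absurd h' (by decide)
    · have := odd_high m 0 (by rw [show 2 * m + 1 = k from by omega]; exact hk 0 0)
      rcases this with h' | h' <;> exact absurd h' (by decide)
end

section
/- Let μ : A* → A* be a substitution and u a right-infinite fixed point of μ with growing seed a. The Dumont–Thomas numeration system over ℕ associated with μ, u and r = 0 is positional if and only if the map c ↦ |μ^ℓ(c)| is constant over the set E_μ of non-final letters of μ for every ℓ ≥ 0; in that case the weights are U_ℓ = |μ^ℓ(a)|. -/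
/-- A sequence `((m_i, a_i))_{i=0,...,k-1}` is admissible with respect to `μ` if
`m_{i-1} a_{i-1}` is a prefix of `μ(a_i)` for every `1 ≤ i ≤ k-1`. -/
def Admissible {A : Type*} (μ : A → List A) (k : ℕ) (s : Fin k → List A × A) : Prop :=
  ∀ i : Fin k, 0 < i.val →
    ((s ⟨i.val - 1, by have := i.isLt; omega⟩).1 ++
      [(s ⟨i.val - 1, by have := i.isLt; omega⟩).2]) <+: μ (s i).2

/-- A sequence `((m_i, a_i))_{i=0,...,k-1}` is `a`-admissible with respect to `μ`
if it is admissible and moreover `m_{k-1} a_{k-1}` is a prefix of `μ(a)`. -/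
def LetterAdmissible {A : Type*} (μ : A → List A) (a : A) (k : ℕ)
    (s : Fin k → List A × A) : Prop :=
  Admissible μ k s ∧ ∀ h : 0 < k,
    ((s ⟨k - 1, by omega⟩).1 ++ [(s ⟨k - 1, by omega⟩).2]) <+: μ a

/-- The word `μ^{k-1}(m_{k-1}) · μ^{k-2}(m_{k-2}) ⋯ μ^0(m_0)` associated with a
sequence `((m_i, a_i))_{i=0,...,k-1}`. -/
def dtProd {A : Type*} (μ : A → List A) (k : ℕ) (s : Fin k → List A × A) : List A :=
  ((List.ofFn fun i : Fin k => substApp μ i.val (s i).1)).reverse.flatten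

/-- A letter `c` is non-final for `μ` if `μ(d) = x · c · y` for some letter `d`,
word `x`, and nonempty word `y`. -/
def NonFinal {A : Type*} (μ : A → List A) (c : A) : Prop :=
  ∃ (d : A) (x y : List A), y ≠ [] ∧ μ d = x ++ c :: y

/-- The Dumont–Thomas numeration system over `ℕ` associated with the substitution
`μ` and the fixed point `u` with growing seed `a` is positional with weights `U`:
whenever `|m_{k-1}| ⋯ |m_0|` is the representation of `n ≥ 1` (that is,
`((m_i,a_i))` is the unique `a`-admissible sequence with `m_{k-1} ≠ ε` and
`u_0 ⋯ u_{n-1} = μ^{k-1}(m_{k-1}) ⋯ μ^0(m_0)`), we have `n = ∑ i |m_i| · U i`. -/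
def PositionalWith {A : Type*} (μ : A → List A) (a : A) (u : ℕ → A) (U : ℕ → ℕ) : Prop :=
  ∀ n : ℕ, 1 ≤ n → ∀ (k : ℕ) (s : Fin k → List A × A),
    LetterAdmissible μ a k s →
    (∀ h : 0 < k, (s ⟨k - 1, by omega⟩).1 ≠ []) →
    List.ofFn (fun i : Fin n => u i.val) = dtProd μ k s →
    n = ∑ i : Fin k, (s i).1.length * U i.val

namespace DT
variable {A : Type*} (μ : A → List A)

lemma substApp_zero (w : List A) : substApp μ 0 w = w := rfl

lemma substApp_succ (n : ℕ) (w : List A) :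
    substApp μ (n+1) w = substApp μ n (w.flatMap μ) :=
  Function.iterate_succ_apply _ _ _

lemma substApp_succ' (n : ℕ) (w : List A) :
    substApp μ (n+1) w = (substApp μ n w).flatMap μ :=
  Function.iterate_succ_apply' _ _ _

lemma substApp_append (n : ℕ) (w1 w2 : List A) :
    substApp μ n (w1 ++ w2) = substApp μ n w1 ++ substApp μ n w2 := by
  induction n generalizing w1 w2 with
  | zero => rfl
  | succ n ih => rw [substApp_succ, List.flatMap_append, ih, substApp_succ, substApp_succ]

lemma substApp_nil (n : ℕ) : substApp μ n ([] : List A) = [] := by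
  induction n with
  | zero => rfl
  | succ n ih => rw [substApp_succ]; simpa using ih

lemma substApp_ne_nil (hne : ∀ c, μ c ≠ []) (n : ℕ) (w : List A) (hw : w ≠ []) :
    substApp μ n w ≠ [] := by
  induction n generalizing w with
  | zero => exact hw
  | succ n ih =>
    rw [substApp_succ]
    apply ih
    cases w with
    | nil => exact absurd rfl hw
    | cons b w' => simp [List.flatMap_cons, hne b]

lemma substApp_singletons (n : ℕ) (w : List A) :
    substApp μ n w = w.flatMap (fun e => substApp μ n [e]) := by
  induction w with
  | nil => simp [substApp_nil]
  | cons e t ih =>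
    have : (e :: t) = [e] ++ t := rfl
    rw [this, substApp_append, List.flatMap_append, ← ih, List.flatMap_singleton]

lemma substApp_single_succ (n : ℕ) (d : A) :
    substApp μ (n+1) [d] = substApp μ n (μ d) := by
  rw [substApp_succ]; simp

end DT
namespace DT
variable {A : Type*} (μ : A → List A)

lemma rev_flat_map (l : List (List A)) :
    (l.map (fun v => v.flatMap μ)).reverse.flatten = l.reverse.flatten.flatMap μ := by
  induction l with
  | nil => rfl
  | cons v l ih => simp [List.flatMap_append, ih]

lemma dtProd_zero (s : Fin 0 → List A × A) : dtProd μ 0 s = [] := rfl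

lemma dtProd_succ_bot (k : ℕ) (s : Fin (k+1) → List A × A) :
    dtProd μ (k+1) s = (dtProd μ k (fun i => s i.succ)).flatMap μ ++ (s 0).1 := by
  unfold dtProd
  rw [List.ofFn_succ, List.reverse_cons, List.flatten_append]
  have h1 : (List.ofFn fun i : Fin k => substApp μ (↑(i.succ)) (s i.succ).1)
      = List.map (fun v => v.flatMap μ) (List.ofFn fun i : Fin k => substApp μ (↑i) (s i.succ).1) := by
    rw [List.map_ofFn]
    exact congrArg List.ofFn (funext fun i => substApp_succ' μ i.val ((s i.succ).1))
  rw [h1, rev_flat_map]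
  have h2 : substApp μ (↑(0 : Fin (k+1))) (s 0).1 = (s 0).1 := rfl
  rw [h2]
  simp

lemma dtProd_succ_top (k : ℕ) (s : Fin (k+1) → List A × A) :
    dtProd μ (k+1) s
      = substApp μ k (s (Fin.last k)).1 ++ dtProd μ k (fun i => s i.castSucc) := by
  unfold dtProd
  rw [List.ofFn_succ', List.concat_eq_append, List.reverse_append]
  simp

lemma dtProd_block (p q : ℕ) (s : Fin (p + q) → List A × A) :
    dtProd μ (p + q) s
      = substApp μ q (dtProd μ p (fun i : Fin p => s ⟨i.val + q, by omega⟩))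
        ++ dtProd μ q (fun i : Fin q => s ⟨i.val, by omega⟩) := by
  induction q with
  | zero =>
    simp [substApp_zero, dtProd_zero]
  | succ q ih =>
    have e1 : dtProd μ (p + (q+1)) s
        = (dtProd μ (p+q) (fun i : Fin (p+q) => s i.succ)).flatMap μ
          ++ (s ⟨0, by omega⟩).1 :=
      dtProd_succ_bot μ (p+q) s
    have e2 : dtProd μ (q+1) (fun i : Fin (q+1) => s ⟨i.val, by omega⟩)
        = (dtProd μ q (fun i : Fin q => s ⟨i.val+1, by omega⟩)).flatMap μ
          ++ (s ⟨0, by omega⟩).1 :=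
      dtProd_succ_bot μ q _
    rw [e1, ih, e2, List.flatMap_append, ← substApp_succ', ← List.append_assoc]
    rfl

lemma dtProd_length (k : ℕ) (s : Fin k → List A × A) :
    (dtProd μ k s).length = ∑ i : Fin k, (substApp μ i.val (s i).1).length := by
  simp [dtProd, List.sum_reverse, List.map_ofFn, List.sum_ofFn, Function.comp]

lemma dtProd_nil_digits (k : ℕ) (s : Fin k → List A × A) (h : ∀ i, (s i).1 = []) :
    dtProd μ k s = [] := by
  apply List.flatten_eq_nil_iff.mpr
  intro l hl
  rw [List.mem_reverse, List.mem_ofFn] at hl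
  obtain ⟨i, rfl⟩ := hl
  show substApp μ i.val (s i).1 = []
  rw [h i, substApp_nil]

lemma dtProd_eq_nil (hne : ∀ c, μ c ≠ []) (k : ℕ) (s : Fin k → List A × A)
    (h : dtProd μ k s = []) : ∀ i, (s i).1 = [] := by
  intro i
  by_contra hni
  have hmem : substApp μ i.val (s i).1
      ∈ (List.ofFn fun i : Fin k => substApp μ i.val (s i).1).reverse := by
    rw [List.mem_reverse, List.mem_ofFn]; exact ⟨i, rfl⟩
  have := List.flatten_eq_nil_iff.mp h _ hmem
  exact substApp_ne_nil μ hne i.val (s i).1 hni this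

end DT
namespace DT
variable {A : Type*} (μ : A → List A)

lemma flatMap_split (g : A → List A) :
    ∀ (w L : List A) (e : A) (R : List A), w.flatMap g = L ++ e :: R →
      ∃ (L' : List A) (e' : A) (R' x y : List A),
        w = L' ++ e' :: R' ∧ g e' = x ++ e :: y ∧ L = L'.flatMap g ++ x := by
  intro w
  induction w with
  | nil => intro L e R h; simp at h
  | cons b w' ih =>
    intro L e R h
    rw [List.flatMap_cons] at h
    rcases List.append_eq_append_iff.mp h with ⟨c', hc1, hc2⟩ | ⟨c', hc1, hc2⟩
    · -- L = g b ++ c', w'.flatMap g = c' ++ e :: R  (check orientation below)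
      obtain ⟨L'', e'', R'', x, y, hw', hg, hL⟩ := ih c' e R hc2
      refine ⟨b :: L'', e'', R'', x, y, by simp [hw'], hg, ?_⟩
      rw [hc1, hL, List.flatMap_cons, List.append_assoc]
    · -- g b = L ++ c', e :: R = c' ++ w'.flatMap g
      cases c' with
      | nil =>
        simp only [List.nil_append] at hc1 hc2
        obtain ⟨L'', e'', R'', x, y, hw', hg, hL⟩ := ih [] e R hc2.symm
        obtain ⟨h1, h2⟩ := List.append_eq_nil_iff.mp hL.symm
        refine ⟨b :: L'', e'', R'', x, y, by simp [hw'], hg, ?_⟩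
        rw [List.flatMap_cons, h1, h2, List.append_nil, List.append_nil, hc1,
          List.append_nil]
      | cons e0 c'' =>
        obtain ⟨he, hR⟩ : e0 = e ∧ R = c'' ++ w'.flatMap g := by
          have := hc2
          simp only [List.cons_append] at this
          exact ⟨(List.cons.injEq _ _ _ _ ▸ this).1.symm ▸ rfl, by
            cases this; rfl⟩
        refine ⟨[], b, w', L, c'', rfl, ?_, by simp⟩
        rw [hc1, he]

end DT
namespace DT
variable {A : Type*} (μ : A → List A)

/-- bottom block `bot` (levels `< q`) followed by top block `top` (levels `≥ q`). -/
def seqApp {β : Type*} {p q : ℕ} (bot : Fin q → β) (top : Fin p → β) :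
    Fin (p + q) → β := fun i =>
  if h : i.val < q then bot ⟨i.val, h⟩ else top ⟨i.val - q, by have := i.isLt; omega⟩

lemma seqApp_lo {β : Type*} {p q : ℕ} (bot : Fin q → β) (top : Fin p → β)
    (j : ℕ) (hj : j < p + q) (h : j < q) :
    seqApp bot top ⟨j, hj⟩ = bot ⟨j, h⟩ := dif_pos h

lemma seqApp_hi {β : Type*} {p q : ℕ} (bot : Fin q → β) (top : Fin p → β)
    (j : ℕ) (hj : j < p + q) (h : ¬ j < q) :
    seqApp bot top ⟨j, hj⟩ = top ⟨j - q, by omega⟩ := dif_neg h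

lemma seqApp_top_eq {β : Type*} {p q : ℕ} (bot : Fin q → β) (top : Fin p → β) :
    (fun i : Fin p => seqApp bot top ⟨i.val + q, by have := i.isLt; omega⟩) = top := by
  funext i
  rw [seqApp_hi _ _ _ _ (by omega)]
  congr 1
  exact Fin.ext (show i.val + q - q = i.val by omega)

lemma seqApp_bot_eq {β : Type*} {p q : ℕ} (bot : Fin q → β) (top : Fin p → β) :
    (fun i : Fin q => seqApp bot top ⟨i.val, by have := i.isLt; omega⟩) = bot := by
  funext i
  rw [seqApp_lo _ _ _ _ (by omega)]

lemma dtProd_seqApp {p q : ℕ} (bot : Fin q → List A × A) (top : Fin p → List A × A) :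
    dtProd μ (p + q) (seqApp bot top)
      = substApp μ q (dtProd μ p top) ++ dtProd μ q bot := by
  rw [dtProd_block μ p q (seqApp bot top), seqApp_top_eq, seqApp_bot_eq]

lemma seqApp_letterAdmissible (a : A) {p q : ℕ} (hp : 0 < p) (hq : 0 < q)
    (bot : Fin q → List A × A) (top : Fin p → List A × A)
    (hbot : Admissible μ q bot)
    (htop : LetterAdmissible μ a p top)
    (hlink : ((bot ⟨q - 1, by omega⟩).1 ++ [(bot ⟨q - 1, by omega⟩).2])
        <+: μ ((top ⟨0, hp⟩).2)) :
    LetterAdmissible μ a (p + q) (seqApp bot top) := by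
  constructor
  · intro i hi
    rcases Nat.lt_trichotomy i.val q with h | h | h
    · have e1 : seqApp bot top ⟨i.val - 1, by have := i.isLt; omega⟩
          = bot ⟨i.val - 1, by omega⟩ := seqApp_lo _ _ _ _ (by omega)
      have e2 : seqApp bot top i = bot ⟨i.val, h⟩ := seqApp_lo _ _ _ i.isLt h
      rw [e1, e2]
      exact hbot ⟨i.val, h⟩ hi
    · have e1 : seqApp bot top ⟨i.val - 1, by have := i.isLt; omega⟩
          = bot ⟨q - 1, by omega⟩ := by
        rw [seqApp_lo _ _ _ _ (by omega)]
        congr 1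
        exact Fin.ext (show i.val - 1 = q - 1 by omega)
      have e2 : seqApp bot top i = top ⟨0, hp⟩ :=
        (seqApp_hi _ _ _ i.isLt (by omega)).trans
          (by congr 1; exact Fin.ext (show i.val - q = 0 by omega))
      rw [e1, e2]
      exact hlink
    · have e1 : seqApp bot top ⟨i.val - 1, by have := i.isLt; omega⟩
          = top ⟨i.val - 1 - q, by have := i.isLt; omega⟩ := by
        rw [seqApp_hi _ _ _ _ (by omega)]
      have e2 : seqApp bot top i = top ⟨i.val - q, by have := i.isLt; omega⟩ :=
        seqApp_hi _ _ _ i.isLt (by omega)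
      rw [e1, e2]
      have h3 := htop.1 ⟨i.val - q, by have := i.isLt; omega⟩
        (show 0 < i.val - q by omega)
      have e3 : (⟨i.val - q - 1, by have := i.isLt; omega⟩ : Fin p)
          = ⟨i.val - 1 - q, by have := i.isLt; omega⟩ :=
        Fin.ext (show i.val - q - 1 = i.val - 1 - q by omega)
      rw [e3] at h3
      exact h3
  · intro hk
    have e1 : seqApp bot top ⟨p + q - 1, by omega⟩
        = top ⟨p - 1, by omega⟩ := by
      rw [seqApp_hi _ _ _ _ (by omega)]
      congr 1
      exact Fin.ext (show p + q - 1 - q = p - 1 by omega)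
    rw [e1]
    exact htop.2 hp

end DT
namespace DT
variable {A : Type*} (μ : A → List A)

lemma trim (a : A) (hhead : ∀ b, [b] <+: μ a → μ b = μ a) :
    ∀ (k : ℕ) (s : Fin k → List A × A), LetterAdmissible μ a k s →
    ∃ (k' : ℕ) (s' : Fin k' → List A × A), LetterAdmissible μ a k' s' ∧
      (∀ h : 0 < k', (s' ⟨k' - 1, by omega⟩).1 ≠ []) ∧
      dtProd μ k' s' = dtProd μ k s ∧
      ∀ U : ℕ → ℕ, (∑ i : Fin k', (s' i).1.length * U i.val)
        = ∑ i : Fin k, (s i).1.length * U i.val := by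
  intro k
  induction k with
  | zero =>
    intro s hs
    exact ⟨0, s, hs, fun h => absurd h (by omega), rfl, fun U => rfl⟩
  | succ k ih =>
    intro s hs
    by_cases hE : (s ⟨k, Nat.lt_succ_self k⟩).1 = []
    · have hla' : LetterAdmissible μ a k (fun i => s i.castSucc) := by
        constructor
        · intro i hi
          exact hs.1 ⟨i.val, by have := i.isLt; omega⟩ hi
        · intro hk
          have h1 := hs.1 ⟨k, by omega⟩ hk
          have h0 := hs.2 (Nat.succ_pos k)
          simp only [Nat.add_sub_cancel] at h0
          rw [hE] at h0
          simp only [List.nil_append] at h0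
          have hμb := hhead _ h0
          rw [hμb] at h1
          exact h1
      obtain ⟨k'', s'', h2, h3, h4, h5⟩ := ih (fun i => s i.castSucc) hla'
      refine ⟨k'', s'', h2, h3, ?_, ?_⟩
      · rw [h4, dtProd_succ_top]
        rw [show (s (Fin.last k)).1 = [] from hE, substApp_nil]
        simp
      · intro U
        rw [h5 U, Fin.sum_univ_castSucc (f := fun i : Fin (k+1) => (s i).1.length * U i.val)]
        rw [show (s (Fin.last k)).1 = [] from hE]
        simp
    · exact ⟨k+1, s, hs, fun _ => hE, rfl, fun U => rfl⟩

lemma repOfSplit (a : A) :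
    ∀ (p : ℕ), 0 < p → ∀ (L : List A) (e : A) (R : List A),
      substApp μ p [a] = L ++ e :: R →
      ∃ s : Fin p → List A × A, LetterAdmissible μ a p s ∧
        (∀ h : 0 < p, (s ⟨0, h⟩).2 = e) ∧ dtProd μ p s = L := by
  intro p
  induction p with
  | zero => intro h; exact absurd h (by omega)
  | succ p ih =>
    intro _ L e R h
    by_cases hp0 : p = 0
    · subst hp0
      have hμ : μ a = L ++ e :: R := by
        rw [substApp_succ] at h
        simpa [substApp_zero] using h
      refine ⟨fun _ => (L, e), ⟨?_, ?_⟩, fun _ => rfl, ?_⟩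
      · intro i hi; exact absurd hi (by have := i.isLt; omega)
      · intro _
        exact ⟨R, by rw [hμ]; simp⟩
      · rw [dtProd_succ_bot]
        simp [dtProd_zero]
    · have hp1 : 0 < p := Nat.pos_of_ne_zero hp0
      rw [substApp_succ'] at h
      obtain ⟨L', e', R', x, y, hw, hg, hL⟩ :=
        flatMap_split (g := μ) (substApp μ p [a]) L e R h
      obtain ⟨t, htla, htbot, htprod⟩ := ih hp1 L' e' R' hw
      refine ⟨seqApp (fun _ : Fin 1 => (x, e)) t, ?_, fun _ => rfl, ?_⟩
      · refine seqApp_letterAdmissible μ a hp1 one_pos _ _ ?_ htla ?_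
        · intro i hi; exact absurd hi (by have := i.isLt; omega)
        · show (x ++ [e]) <+: μ ((t ⟨0, hp1⟩).2)
          rw [htbot hp1]
          exact ⟨y, by rw [hg]; simp⟩
      · rw [dtProd_seqApp, htprod]
        have h1 : substApp μ 1 L' = L'.flatMap μ := substApp_succ μ 0 L'
        have h2 : dtProd μ 1 (fun _ : Fin 1 => (x, e)) = x := by
          rw [dtProd_succ_bot]; simp [dtProd_zero]
        rw [h1, h2]
        exact hL.symm

end DT
namespace DT
variable {A : Type*} (μ : A → List A)

lemma sum_map_const {α : Type*} (l : List α) (f : α → ℕ) (K : ℕ)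
    (h : ∀ e ∈ l, f e = K) : (l.map f).sum = l.length * K := by
  induction l with
  | nil => simp
  | cons b t ih =>
    simp only [List.map_cons, List.sum_cons, List.length_cons]
    rw [h b List.mem_cons_self, ih (fun e he => h e (List.mem_cons_of_mem _ he))]
    ring

lemma prefix_u (a : A) (u : ℕ → A)
    (hu : ∀ n : ℕ,
      List.ofFn (fun i : Fin (substApp μ n [a]).length => u i.val) = substApp μ n [a])
    (q : ℕ) (w : List A) (hw : w <+: substApp μ q [a]) :
    List.ofFn (fun i : Fin w.length => u i.val) = w := by
  have hlen : w.length ≤ (substApp μ q [a]).length := hw.length_le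
  apply List.ext_getElem (by simp)
  intro i h1 h2
  simp only [List.getElem_ofFn]
  have h3 := hu q
  have hx : i < (List.ofFn fun j : Fin (substApp μ q [a]).length => u j.val).length := by
    simpa using (show i < (substApp μ q [a]).length by omega)
  have h4 : (substApp μ q [a])[i]'(by omega) = u i :=
    (List.getElem_of_eq h3 hx).symm.trans (List.getElem_ofFn _)
  rw [← h4]
  exact (hw.getElem h2).symm

lemma letters_nonfinal (a : A) (k : ℕ) (s : Fin k → List A × A)
    (hla : LetterAdmissible μ a k s) (i : Fin k) :
    ∀ e ∈ (s i).1, NonFinal μ e := by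
  intro e he
  have hex : ∃ b, ((s i).1 ++ [(s i).2]) <+: μ b := by
    by_cases hik : i.val + 1 < k
    · exact ⟨(s ⟨i.val + 1, hik⟩).2, hla.1 ⟨i.val + 1, hik⟩ (Nat.succ_pos i.val)⟩
    · refine ⟨a, ?_⟩
      have h2 := hla.2 (by have := i.isLt; omega)
      have he2 : (⟨k - 1, by have := i.isLt; omega⟩ : Fin k) = i :=
        Fin.ext (show k - 1 = i.val by have := i.isLt; omega)
      rw [he2] at h2
      exact h2
  obtain ⟨b, hbpre⟩ := hex
  obtain ⟨pre, suf, hps⟩ := List.append_of_mem he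
  obtain ⟨rest, hrest⟩ := hbpre
  refine ⟨b, pre, suf ++ (s i).2 :: rest, by simp, ?_⟩
  rw [← hrest, hps]
  simp

lemma positional_of_const (hne : ∀ c, μ c ≠ []) (a : A) (ta : List A)
    (hμa : μ a = a :: ta) (hta : ta ≠ []) (u : ℕ → A)
    (hconst : ∀ (ℓ : ℕ) (c c' : A), NonFinal μ c → NonFinal μ c' →
      (substApp μ ℓ [c]).length = (substApp μ ℓ [c']).length) :
    PositionalWith μ a u (fun ℓ => (substApp μ ℓ [a]).length) := by
  have hNFa : NonFinal μ a := ⟨a, [], ta, hta, by simpa using hμa⟩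
  intro n hn k s hla htop hofn
  have hlen : n = (dtProd μ k s).length := by
    rw [← hofn]; simp
  rw [hlen, dtProd_length]
  apply Finset.sum_congr rfl
  intro i _
  rw [substApp_singletons, List.length_flatMap]
  exact sum_map_const _ _ _
    (fun e he => hconst i.val e a (letters_nonfinal μ a k s hla i e he) hNFa)

end DT
namespace DT
variable {A : Type*} (μ : A → List A)

lemma sum_of_rep (hne : ∀ c, μ c ≠ []) (a : A) (u : ℕ → A) (U : ℕ → ℕ)
    (hu : ∀ n : ℕ,
      List.ofFn (fun i : Fin (substApp μ n [a]).length => u i.val) = substApp μ n [a])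
    (hhead : ∀ b, [b] <+: μ a → μ b = μ a)
    (hpos : PositionalWith μ a u U)
    (k : ℕ) (s : Fin k → List A × A) (hla : LetterAdmissible μ a k s)
    (Q : ℕ) (hpre : dtProd μ k s <+: substApp μ Q [a]) :
    (dtProd μ k s).length = ∑ i : Fin k, (s i).1.length * U i.val := by
  obtain ⟨k', s', hla', htop', hprod', hsum'⟩ := trim μ a hhead k s hla
  by_cases h0 : (dtProd μ k s).length = 0
  · rw [h0]; symm
    apply Finset.sum_eq_zero
    intro i _
    rw [dtProd_eq_nil μ hne k s (List.length_eq_zero_iff.mp h0) i]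
    simp
  · have h1 : 1 ≤ (dtProd μ k s).length := by omega
    have h2 := hpos (dtProd μ k s).length h1 k' s' hla' htop'
      (by rw [hprod']; exact prefix_u μ a u hu Q _ hpre)
    rw [h2, hsum' U]

/-- The bottom block used to spell out the occurrence of `c` at level `ℓ`:
digits `[]` with a head-letter chain below level `ℓ`, digit `x` at level `ℓ`. -/
def botBlock (hne : ∀ c, μ c ≠ []) (ℓ : ℕ) (x : List A) (c : A) :
    Fin (ℓ + 1) → List A × A := fun i =>
  if h : i.val < ℓ then ([], (fun e => (μ e).head (hne e))^[ℓ - i.val] c) else (x, c)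

lemma botBlock_lo (hne : ∀ c, μ c ≠ []) (ℓ : ℕ) (x : List A) (c : A)
    (j : ℕ) (hj : j < ℓ + 1) (h : j < ℓ) :
    botBlock μ hne ℓ x c ⟨j, hj⟩ = ([], (fun e => (μ e).head (hne e))^[ℓ - j] c) :=
  dif_pos h

lemma botBlock_hi (hne : ∀ c, μ c ≠ []) (ℓ : ℕ) (x : List A) (c : A)
    (hj : ℓ < ℓ + 1) : botBlock μ hne ℓ x c ⟨ℓ, hj⟩ = (x, c) :=
  dif_neg (lt_irrefl ℓ)

lemma botBlock_adm (hne : ∀ c, μ c ≠ []) (ℓ : ℕ) (x : List A) (c : A) :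
    Admissible μ (ℓ + 1) (botBlock μ hne ℓ x c) := by
  intro i hi
  have hlt : i.val < ℓ + 1 := i.isLt
  have e0 : i = ⟨i.val, hlt⟩ := Fin.ext rfl
  by_cases h : i.val < ℓ
  · have e2 : botBlock μ hne ℓ x c i
        = ([], (fun e => (μ e).head (hne e))^[ℓ - i.val] c) := by
      rw [e0]; exact botBlock_lo μ hne ℓ x c i.val hlt h
    have e1 : botBlock μ hne ℓ x c ⟨i.val - 1, by omega⟩
        = ([], (fun e => (μ e).head (hne e))^[ℓ - (i.val - 1)] c) :=
      botBlock_lo μ hne ℓ x c (i.val - 1) (by omega) (by omega)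
    rw [e1, e2]
    have e3 : ℓ - (i.val - 1) = (ℓ - i.val) + 1 := by omega
    rw [e3, Function.iterate_succ_apply']
    simp only [List.nil_append]
    exact ⟨_, (List.cons_head_tail (hne _))⟩
  · -- i.val = ℓ, and 0 < ℓ
    have hiℓ : i.val = ℓ := by omega
    have hℓ : 0 < ℓ := by omega
    have e2 : botBlock μ hne ℓ x c i = (x, c) := by
      rw [e0, show (⟨i.val, hlt⟩ : Fin (ℓ+1)) = ⟨ℓ, by omega⟩ from Fin.ext hiℓ]
      exact botBlock_hi μ hne ℓ x c (by omega)
    have e1 : botBlock μ hne ℓ x c ⟨i.val - 1, by omega⟩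
        = ([], (fun e => (μ e).head (hne e))^[ℓ - (i.val - 1)] c) :=
      botBlock_lo μ hne ℓ x c (i.val - 1) (by omega) (by omega)
    rw [e1, e2]
    have e3 : ℓ - (i.val - 1) = 1 := by omega
    rw [e3]
    simp only [List.nil_append, Function.iterate_one]
    exact ⟨(μ c).tail, List.cons_head_tail (hne c)⟩

lemma botBlock_dtProd (hne : ∀ c, μ c ≠ []) (ℓ : ℕ) (x : List A) (c : A) :
    dtProd μ (ℓ + 1) (botBlock μ hne ℓ x c) = substApp μ ℓ x := by
  rw [dtProd_succ_top]
  have e1 : botBlock μ hne ℓ x c (Fin.last ℓ) = (x, c) :=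
    botBlock_hi μ hne ℓ x c (Nat.lt_succ_self ℓ)
  rw [show botBlock μ hne ℓ x c (Fin.last ℓ) = (x, c) from e1]
  have e2 : dtProd μ ℓ (fun i : Fin ℓ => botBlock μ hne ℓ x c i.castSucc) = [] := by
    apply dtProd_nil_digits
    intro i
    have e3 : botBlock μ hne ℓ x c i.castSucc
        = ([], (fun e => (μ e).head (hne e))^[ℓ - i.val] c) :=
      botBlock_lo μ hne ℓ x c i.val (by have := i.isLt; omega) i.isLt
    rw [e3]
  rw [e2, List.append_nil]

end DT
namespace DT
variable {A : Type*} (μ : A → List A)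

lemma nonfinal_len (hne : ∀ c, μ c ≠ []) (a : A) (ta : List A) (hμa : μ a = a :: ta)
    (u : ℕ → A)
    (hu : ∀ n : ℕ,
      List.ofFn (fun i : Fin (substApp μ n [a]).length => u i.val) = substApp μ n [a])
    (hmin : ∀ c : A, ∃ n, c ∈ substApp μ n [a])
    (U : ℕ → ℕ) (hpos : PositionalWith μ a u U)
    (ℓ : ℕ) (c : A) (hc : NonFinal μ c) :
    (substApp μ ℓ [c]).length = U ℓ := by
  obtain ⟨d, x, y, hy, hd⟩ := hc
  have hhead : ∀ b, [b] <+: μ a → μ b = μ a := by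
    intro b hb
    obtain ⟨t2, ht2⟩ := hb
    rw [hμa] at ht2
    simp only [List.singleton_append] at ht2
    injection ht2 with h1 _
    rw [h1]
  have hchain : ∀ n : ℕ, substApp μ n [a] <+: substApp μ (n+1) [a] := by
    intro n
    rw [substApp_single_succ, hμa, show (a :: ta) = [a] ++ ta from rfl, substApp_append]
    exact ⟨_, rfl⟩
  have hmono : ∀ m n : ℕ, m ≤ n → substApp μ m [a] <+: substApp μ n [a] := by
    intro m n hmn
    induction n, hmn using Nat.le_induction with
    | base => exact List.prefix_refl _
    | succ n hmn ih => exact ih.trans (hchain n)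
  obtain ⟨p0, hp0⟩ := hmin d
  have hdp : d ∈ substApp μ (p0 + 1) [a] := (hmono p0 (p0+1) (by omega)).subset hp0
  obtain ⟨L, R, hLR⟩ := List.append_of_mem hdp
  set p := p0 + 1 with hpdef
  have hp1 : 0 < p := Nat.succ_pos p0
  obtain ⟨t, htla, htbot, htprod⟩ := repOfSplit μ a p hp1 L d R hLR
  have hy' : y = y.head hy :: y.tail := (List.cons_head_tail hy).symm
  set b0 := y.head hy with hb0
  set s1 := seqApp (botBlock μ hne ℓ x c) t with hs1
  set s2 := seqApp (botBlock μ hne ℓ (x ++ [c]) b0) t with hs2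
  have hla1 : LetterAdmissible μ a (p + (ℓ+1)) s1 := by
    refine seqApp_letterAdmissible μ a hp1 (Nat.succ_pos ℓ) _ _
      (botBlock_adm μ hne ℓ x c) htla ?_
    have e := botBlock_hi μ hne ℓ x c (Nat.lt_succ_self ℓ)
    rw [show botBlock μ hne ℓ x c ⟨ℓ + 1 - 1, by omega⟩ = (x, c) from e]
    rw [htbot hp1]
    exact ⟨y, by rw [hd]; simp⟩
  have hla2 : LetterAdmissible μ a (p + (ℓ+1)) s2 := by
    refine seqApp_letterAdmissible μ a hp1 (Nat.succ_pos ℓ) _ _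
      (botBlock_adm μ hne ℓ (x ++ [c]) b0) htla ?_
    have e := botBlock_hi μ hne ℓ (x ++ [c]) b0 (Nat.lt_succ_self ℓ)
    rw [show botBlock μ hne ℓ (x ++ [c]) b0 ⟨ℓ + 1 - 1, by omega⟩ = (x ++ [c], b0) from e]
    rw [htbot hp1]
    refine ⟨y.tail, ?_⟩
    rw [hd, hy']
    simp
  have hprod1 : dtProd μ (p + (ℓ+1)) s1 = substApp μ (ℓ+1) L ++ substApp μ ℓ x := by
    rw [hs1, dtProd_seqApp, htprod, botBlock_dtProd]
  have hprod2 : dtProd μ (p + (ℓ+1)) s2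
      = substApp μ (ℓ+1) L ++ (substApp μ ℓ x ++ substApp μ ℓ [c]) := by
    rw [hs2, dtProd_seqApp, htprod, botBlock_dtProd, substApp_append]
  have hbig : substApp μ (p + (ℓ+1)) [a]
      = substApp μ (ℓ+1) L ++ (substApp μ ℓ x ++ (substApp μ ℓ [c]
          ++ (substApp μ ℓ y ++ substApp μ (ℓ+1) R))) := by
    rw [show p + (ℓ+1) = (ℓ+1) + p from Nat.add_comm _ _]
    rw [show substApp μ ((ℓ+1) + p) [a] = substApp μ (ℓ+1) (substApp μ p [a])
      from Function.iterate_add_apply _ _ _ _]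
    rw [hLR, show (L ++ d :: R) = L ++ ([d] ++ R) from rfl, substApp_append,
      substApp_append]
    congr 1
    rw [substApp_single_succ, hd, show x ++ c :: y = x ++ ([c] ++ y) from rfl,
      substApp_append, substApp_append]
    simp [List.append_assoc]
  have hpre1 : dtProd μ (p + (ℓ+1)) s1 <+: substApp μ (p + (ℓ+1)) [a] := by
    rw [hprod1, hbig]
    exact ⟨substApp μ ℓ [c] ++ (substApp μ ℓ y ++ substApp μ (ℓ+1) R),
      by simp [List.append_assoc]⟩
  have hpre2 : dtProd μ (p + (ℓ+1)) s2 <+: substApp μ (p + (ℓ+1)) [a] := by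
    rw [hprod2, hbig]
    exact ⟨substApp μ ℓ y ++ substApp μ (ℓ+1) R, by simp [List.append_assoc]⟩
  have hsum1 := sum_of_rep μ hne a u U hu hhead hpos _ s1 hla1 _ hpre1
  have hsum2 := sum_of_rep μ hne a u U hu hhead hpos _ s2 hla2 _ hpre2
  have hlen2 : (dtProd μ (p + (ℓ+1)) s2).length
      = (dtProd μ (p + (ℓ+1)) s1).length + (substApp μ ℓ [c]).length := by
    rw [hprod1, hprod2]
    simp [List.length_append]
    omega
  have hdiff : (∑ i : Fin (p + (ℓ+1)), (s2 i).1.length * U i.val)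
      = (∑ i : Fin (p + (ℓ+1)), (s1 i).1.length * U i.val) + U ℓ := by
    have hI := Finset.mem_univ (⟨ℓ, by omega⟩ : Fin (p + (ℓ+1)))
    rw [← Finset.add_sum_erase _ _ hI, ← Finset.add_sum_erase _ _ hI]
    have hs1I : s1 ⟨ℓ, by omega⟩ = (x, c) := by
      rw [hs1, seqApp_lo _ _ _ _ (by omega)]
      exact botBlock_hi μ hne ℓ x c (Nat.lt_succ_self ℓ)
    have hs2I : s2 ⟨ℓ, by omega⟩ = (x ++ [c], b0) := by
      rw [hs2, seqApp_lo _ _ _ _ (by omega)]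
      exact botBlock_hi μ hne ℓ (x ++ [c]) b0 (Nat.lt_succ_self ℓ)
    rw [hs1I, hs2I]
    have herase : (∑ i ∈ Finset.univ.erase (⟨ℓ, by omega⟩ : Fin (p + (ℓ+1))),
          (s2 i).1.length * U i.val)
        = ∑ i ∈ Finset.univ.erase (⟨ℓ, by omega⟩ : Fin (p + (ℓ+1))),
          (s1 i).1.length * U i.val := by
      apply Finset.sum_congr rfl
      intro i hi2
      have hiℓ : i.val ≠ ℓ := by
        intro h
        exact (Finset.mem_erase.mp hi2).1 (Fin.ext h)
      by_cases hlo : i.val < ℓ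
      · have d1 : s1 i = ([], (fun e => (μ e).head (hne e))^[ℓ - i.val] c) := by
          rw [hs1, show i = ⟨i.val, i.isLt⟩ from Fin.ext rfl,
            seqApp_lo _ _ _ _ (by omega)]
          exact botBlock_lo μ hne ℓ x c i.val (by omega) hlo
        have d2 : s2 i = ([], (fun e => (μ e).head (hne e))^[ℓ - i.val] b0) := by
          rw [hs2, show i = ⟨i.val, i.isLt⟩ from Fin.ext rfl,
            seqApp_lo _ _ _ _ (by omega)]
          exact botBlock_lo μ hne ℓ (x ++ [c]) b0 i.val (by omega) hlo
        rw [d1, d2]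
      · have d1 : s1 i = t ⟨i.val - (ℓ+1), by have := i.isLt; omega⟩ := by
          rw [hs1, show i = ⟨i.val, i.isLt⟩ from Fin.ext rfl]
          exact seqApp_hi _ _ _ _ (by omega)
        have d2 : s2 i = t ⟨i.val - (ℓ+1), by have := i.isLt; omega⟩ := by
          rw [hs2, show i = ⟨i.val, i.isLt⟩ from Fin.ext rfl]
          exact seqApp_hi _ _ _ _ (by omega)
        rw [d1, d2]
    rw [herase]
    simp only [List.length_append, List.length_cons, List.length_nil]
    ring
  omega

end DT

/-- Corollary 3.9: for a substitution `μ` with right-infinite fixed point `u` with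
growing seed `a` (and minimal alphabet), the associated Dumont–Thomas numeration
system over `ℕ` is positional iff `c ↦ |μ^ℓ(c)|` is constant over the non-final
letters for every `ℓ`; in that case the weights are `U ℓ = |μ^ℓ(a)|`. -/
theorem stmt12 {A : Type*} (μ : A → List A) (hne : ∀ c, μ c ≠ []) (a : A)
    (hgrow : ∀ N : ℕ, ∃ n, N ≤ (substApp μ n [a]).length)
    (u : ℕ → A)
    (hu : ∀ n : ℕ,
        List.ofFn (fun i : Fin (substApp μ n [a]).length => u i.val) = substApp μ n [a])
    (hmin : ∀ c : A, ∃ n, c ∈ substApp μ n [a]) :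
    ((∃ U : ℕ → ℕ, PositionalWith μ a u U) ↔
      (∀ (ℓ : ℕ) (c c' : A), NonFinal μ c → NonFinal μ c' →
        (substApp μ ℓ [c]).length = (substApp μ ℓ [c']).length)) ∧
    ((∀ (ℓ : ℕ) (c c' : A), NonFinal μ c → NonFinal μ c' →
        (substApp μ ℓ [c]).length = (substApp μ ℓ [c']).length) →
      PositionalWith μ a u (fun ℓ => (substApp μ ℓ [a]).length)) := by
  have h1a : substApp μ 1 [a] = μ a := by
    rw [DT.substApp_succ]
    have : [a].flatMap μ = μ a := by simp
    rw [this, DT.substApp_zero]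
  have hu0 : u 0 = a := by
    have h := hu 0
    have h' : List.ofFn (fun i : Fin 1 => u i.val) = [a] := h
    simpa using h'
  obtain ⟨b, ta, hba⟩ : ∃ b ta, μ a = b :: ta := by
    cases hμ : μ a with
    | nil => exact absurd hμ (hne a)
    | cons b ta => exact ⟨b, ta, rfl⟩
  have hb : b = a := by
    have h3 := DT.prefix_u μ a u hu 1 [b] (by rw [h1a, hba]; exact ⟨ta, rfl⟩)
    have h4 : u 0 = b := by simpa using h3
    exact h4.symm.trans hu0
  rw [hb] at hba
  have hta : ta ≠ [] := by
    intro h0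
    rw [h0] at hba
    have hconst1 : ∀ n, substApp μ n [a] = [a] := by
      intro n
      induction n with
      | zero => rfl
      | succ n ih => rw [DT.substApp_single_succ, hba]; exact ih
    obtain ⟨n, hn⟩ := hgrow 2
    rw [hconst1 n] at hn
    simp at hn
  refine ⟨⟨?_, ?_⟩, ?_⟩
  · rintro ⟨U, hU⟩ ℓ c c' hc hc'
    rw [DT.nonfinal_len μ hne a ta hba u hu hmin U hU ℓ c hc,
        DT.nonfinal_len μ hne a ta hba u hu hmin U hU ℓ c' hc']
  · intro hconst
    exact ⟨_, DT.positional_of_const μ hne a ta hba hta u hconst⟩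
  · intro hconst
    exact DT.positional_of_const μ hne a ta hba hta u hconst
end
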